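/- Let ρ : (0,1] → ℝ be a nonnegative measurable function such that r ↦ r³ρ(r) is integrable on (0,1) and r ↦ r ρ(r) is integrable on (0,1). Suppose there is r* ∈ (0,1] such that the map r ↦ r ρ(r) is nondecreasing on (0, r*]. Then for every δ > 0 and every k ∈ ℤ² \ {0} with r* δ|k| ≥ π, one has δ² λ_δ(k) ≥ π · min{ ∫_{r*/√2}^{r*} r ρ(r) dr , ∫₀^{(3/7)r*} r ρ(r) dr }. -/

import Mathlib

open Real MeasureTheory

/-- Euclidean norm of a nonzero integer vector `k ∈ ℤ²`. -/
noncomputable def knorm2 (k : ℤ × ℤ) : ℝ :=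
  Real.sqrt ((k.1 : ℝ) ^ 2 + (k.2 : ℝ) ^ 2)

/-- The 2D Fourier symbol of the nonlocal diffusion operator:
`λ_δ(k) = (4/δ²) ∫₀^{π/2} ∫₀¹ r ρ(r) (1 − cos(r δ |k| cos θ)) dr dθ`. -/
noncomputable def lambdaDelta2 (ρ : ℝ → ℝ) (δ κ : ℝ) : ℝ :=
  (4 / δ ^ 2) * ∫ θ in (0:ℝ)..(π / 2), ∫ r in (0:ℝ)..1,
    r * ρ r * (1 - Real.cos (r * δ * κ * Real.cos θ))


private lemma abel_nonneg (φ H : ℕ → ℝ) :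
    ∀ n : ℕ, φ 0 = 0 → (∀ m, m < n → φ m ≤ φ (m + 1)) → (∀ m, m ≤ n → 0 ≤ H m) →
      -(φ n * H n) ≤ ∑ j ∈ Finset.range n, φ (j + 1) * (H j - H (j + 1)) := by
  intro n
  induction n with
  | zero => intro h0 _ _; simp [h0]
  | succ m ih =>
    intro h0 h1 h2
    have hih := ih h0 (fun p hp => h1 p (by omega)) (fun p hp => h2 p (by omega))
    rw [Finset.sum_range_succ]
    have hm : 0 ≤ H m := h2 m (by omega)
    have hmono : φ m ≤ φ (m + 1) := h1 m (by omega)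
    nlinarith [mul_nonneg (sub_nonneg.2 hmono) hm]

private lemma key_mono (g : ℝ → ℝ) (L c ω : ℝ) (hL : 0 < L) (hc0 : 0 ≤ c) (hcL : c ≤ L)
    (hω : 0 < ω)
    (hg0 : ∀ r ∈ Set.Ioc (0:ℝ) L, 0 ≤ g r)
    (hmono : MonotoneOn g (Set.Ioc (0:ℝ) L))
    (hgi : IntervalIntegrable g volume 0 L)
    (hcond : 1 + Real.sin (L * ω) ≤ ω * (L - c)) :
    (∫ r in (0:ℝ)..c, g r) ≤ ∫ r in (0:ℝ)..L, g r * (1 - Real.cos (r * ω)) := by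
  set ind : ℝ → ℝ := Set.indicator (Set.Ioc (0:ℝ) c) (fun _ => (1:ℝ)) with hind_def
  set h : ℝ → ℝ := fun r => (1 - Real.cos (r * ω)) - ind r with hh_def
  have hcont : Continuous fun r : ℝ => 1 - Real.cos (r * ω) :=
    continuous_const.sub (Real.continuous_cos.comp (continuous_id.mul continuous_const))
  have hindi : ∀ a b : ℝ, IntervalIntegrable ind volume a b := by
    intro a b
    rw [intervalIntegrable_iff]
    refine MeasureTheory.Integrable.indicator ?_ measurableSet_Ioc
    refine (MeasureTheory.integrableOn_const_iff (by simp)).2 (Or.inr ?_)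
    exact lt_of_le_of_lt (measure_mono Set.Ioc_subset_Icc_self) measure_Icc_lt_top
  have hhi : ∀ a b : ℝ, IntervalIntegrable h volume a b := fun a b =>
    (hcont.intervalIntegrable a b).sub (hindi a b)
  have hgsub : ∀ a b : ℝ, a ∈ Set.Icc (0:ℝ) L → b ∈ Set.Icc (0:ℝ) L →
      IntervalIntegrable g volume a b := by
    intro a b ha hb
    exact hgi.mono_set (Set.uIcc_subset_uIcc (by simpa [Set.uIcc_of_le hL.le] using ha)
      (by simpa [Set.uIcc_of_le hL.le] using hb))
  have hgind : (fun r => g r * ind r) = Set.indicator (Set.Ioc (0:ℝ) c) g := by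
    funext r
    by_cases hr : r ∈ Set.Ioc (0:ℝ) c
    · simp [hind_def, Set.indicator_of_mem hr]
    · simp [hind_def, Set.indicator_of_notMem hr]
  have hgindi : ∀ a b : ℝ, a ∈ Set.Icc (0:ℝ) L → b ∈ Set.Icc (0:ℝ) L →
      IntervalIntegrable (fun r => g r * ind r) volume a b := by
    intro a b ha hb
    rw [hgind, intervalIntegrable_iff]
    exact (intervalIntegrable_iff.1 (hgsub a b ha hb)).indicator measurableSet_Ioc
  have hghsub : ∀ a b : ℝ, a ∈ Set.Icc (0:ℝ) L → b ∈ Set.Icc (0:ℝ) L →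
      IntervalIntegrable (fun r => g r * h r) volume a b := by
    intro a b ha hb
    have h1 := (hgsub a b ha hb).mul_continuousOn hcont.continuousOn
    have h2 := hgindi a b ha hb
    have heq : (fun r => g r * h r)
        = fun r => g r * (1 - Real.cos (r * ω)) - g r * ind r := by
      funext r; simp only [hh_def]; ring
    rw [heq]; exact h1.sub h2
  have h0L : (0:ℝ) ∈ Set.Icc (0:ℝ) L := ⟨le_refl _, hL.le⟩
  have hLL : L ∈ Set.Icc (0:ℝ) L := ⟨hL.le, le_refl _⟩
  have hindval : ∀ t ∈ Set.Icc (0:ℝ) L, (∫ r in t..L, ind r) = max (c - t) 0 := by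
    intro t ht
    rw [intervalIntegral.integral_of_le ht.2, hind_def,
      MeasureTheory.integral_indicator measurableSet_Ioc,
      MeasureTheory.Measure.restrict_restrict measurableSet_Ioc,
      MeasureTheory.setIntegral_const, Set.Ioc_inter_Ioc,
      sup_eq_right.mpr ht.1, inf_eq_left.mpr hcL, Real.volume_real_Ioc]
    simp
  have hcosc : Continuous fun r : ℝ => Real.cos (r * ω) :=
    Real.continuous_cos.comp (continuous_id.mul continuous_const)
  have hA : ∀ t : ℝ, (∫ r in t..L, (1 - Real.cos (r * ω)))
      = (L - t) - ω⁻¹ * (Real.sin (L * ω) - Real.sin (t * ω)) := by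
    intro t
    rw [intervalIntegral.integral_sub intervalIntegrable_const
      (hcosc.intervalIntegrable t L),
      intervalIntegral.integral_const,
      intervalIntegral.integral_comp_mul_right Real.cos (ne_of_gt hω),
      integral_cos]
    simp only [smul_eq_mul, mul_one]
  set H : ℝ → ℝ := fun t => ∫ r in t..L, h r with hH_def
  have hHsplit : ∀ t ∈ Set.Icc (0:ℝ) L,
      H t = (∫ r in t..L, (1 - Real.cos (r * ω))) - max (c - t) 0 := by
    intro t ht
    simp only [hH_def, hh_def]
    rw [intervalIntegral.integral_sub (hcont.intervalIntegrable t L) (hindi t L),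
      hindval t ht]
  have hH0 : ∀ t ∈ Set.Icc (0:ℝ) L, 0 ≤ H t := by
    intro t ht
    rw [hHsplit t ht]
    rcases le_or_gt t c with hcase | hcase
    · rw [hA t, max_eq_left (by linarith)]
      have h1 : Real.sin (L * ω) - Real.sin (t * ω) ≤ Real.sin (L * ω) + 1 := by
        have := Real.neg_one_le_sin (t * ω); linarith
      have h2 : ω⁻¹ * (Real.sin (L * ω) - Real.sin (t * ω)) ≤ ω⁻¹ * (ω * (L - c)) := by
        apply mul_le_mul_of_nonneg_left _ (inv_nonneg.2 hω.le)
        linarith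
      rw [inv_mul_cancel_left₀ (ne_of_gt hω)] at h2
      linarith
    · rw [max_eq_right (by linarith)]
      have hnn : 0 ≤ ∫ r in t..L, (1 - Real.cos (r * ω)) := by
        apply intervalIntegral.integral_nonneg ht.2
        intro u _; nlinarith [Real.cos_le_one (u * ω)]
      linarith
  have hmain : ∀ n : ℕ, 0 < n → -(3 * (L / n) * g L) ≤ ∫ r in (0:ℝ)..L, g r * h r := by
    intro n hn
    have hn' : (0:ℝ) < n := Nat.cast_pos.2 hn
    set Δ : ℝ := L / n with hΔ_def
    have hΔ : 0 < Δ := div_pos hL hn'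
    set x : ℕ → ℝ := fun j => j * Δ with hx_def
    have hx0 : x 0 = 0 := by simp [hx_def]
    have hxn : x n = L := by simp only [hx_def, hΔ_def]; field_simp
    have hxstep : ∀ j : ℕ, x (j + 1) - x j = Δ := by
      intro j; simp only [hx_def]; push_cast; ring
    have hxmono : ∀ j : ℕ, x j ≤ x (j + 1) := by
      intro j; have := hxstep j; linarith
    have hxmem : ∀ j : ℕ, j ≤ n → x j ∈ Set.Icc (0:ℝ) L := by
      intro j hj
      constructor
      · exact mul_nonneg (Nat.cast_nonneg j) hΔ.le
      · rw [← hxn]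
        exact mul_le_mul_of_nonneg_right (by exact_mod_cast hj) hΔ.le
    have hxpos : ∀ j : ℕ, 1 ≤ j → 0 < x j := by
      intro j hj
      have h1 : (1:ℝ) ≤ (j:ℝ) := by exact_mod_cast hj
      simp only [hx_def]; nlinarith
    set φ : ℕ → ℝ := fun j => if j = 0 then 0 else g (x j) with hφ_def
    have hφmono : ∀ m : ℕ, m < n → φ m ≤ φ (m + 1) := by
      intro m hm
      have hm1 : x (m + 1) ∈ Set.Ioc (0:ℝ) L :=
        ⟨hxpos (m + 1) (by omega), (hxmem (m + 1) (by omega)).2⟩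
      rcases Nat.eq_zero_or_pos m with rfl | hmpos
      · simp only [hφ_def, if_pos rfl, if_neg (by omega : (0:ℕ) + 1 ≠ 0)]
        exact hg0 _ hm1
      · have hmm : x m ∈ Set.Ioc (0:ℝ) L := ⟨hxpos m hmpos, (hxmem m (by omega)).2⟩
        simp only [hφ_def, if_neg (by omega : m ≠ 0), if_neg (by omega : m + 1 ≠ 0)]
        exact hmono hmm hm1 (hxmono m)
    have est : ∀ j : ℕ, j < n →
        φ (j + 1) * (H (x j) - H (x (j + 1))) - 3 * Δ * (φ (j + 1) - φ j)
          ≤ ∫ r in x j..x (j + 1), g r * h r := by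
      intro j hj
      have hmemj := hxmem j (by omega)
      have hmemj1 := hxmem (j + 1) (by omega)
      have hK : φ (j + 1) = g (x (j + 1)) := if_neg (by omega)
      have hHd : H (x j) - H (x (j + 1)) = ∫ r in x j..x (j + 1), h r := by
        have hadd := intervalIntegral.integral_add_adjacent_intervals
          (hhi (x j) (x (j + 1))) (hhi (x (j + 1)) L)
        simp only [hH_def]
        linarith [hadd]
      have hsub1 := hghsub (x j) (x (j + 1)) hmemj hmemj1
      have hsub2 := hhi (x j) (x (j + 1))
      have decomp : (∫ r in x j..x (j + 1), g r * h r)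
          = (∫ r in x j..x (j + 1), (g r - g (x (j + 1))) * h r)
            + g (x (j + 1)) * ∫ r in x j..x (j + 1), h r := by
        rw [← intervalIntegral.integral_const_mul, ← intervalIntegral.integral_add]
        · congr 1; funext r; ring
        · have heq2 : (fun r => (g r - g (x (j + 1))) * h r)
              = fun r => g r * h r - g (x (j + 1)) * h r := by funext r; ring
          rw [heq2]; exact hsub1.sub (hsub2.const_mul _)
        · exact hsub2.const_mul _
      have hbound : ‖∫ r in x j..x (j + 1), (g r - g (x (j + 1))) * h r‖
          ≤ 3 * (g (x (j + 1)) - φ j) * |x (j + 1) - x j| := by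
        apply intervalIntegral.norm_integral_le_of_norm_le_const
        intro r hr
        rw [Set.uIoc_of_le (hxmono j)] at hr
        have hrIoc : r ∈ Set.Ioc (0:ℝ) L :=
          ⟨lt_of_le_of_lt hmemj.1 hr.1, le_trans hr.2 hmemj1.2⟩
        have hj1Ioc : x (j + 1) ∈ Set.Ioc (0:ℝ) L :=
          ⟨lt_of_lt_of_le hrIoc.1 hr.2, hmemj1.2⟩
        have hgle : g r ≤ g (x (j + 1)) := hmono hrIoc hj1Ioc hr.2
        have hgge : φ j ≤ g r := by
          rcases Nat.eq_zero_or_pos j with rfl | hjpos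
          · simp only [hφ_def, if_pos rfl]; exact hg0 r hrIoc
          · simp only [hφ_def, if_neg (by omega : j ≠ 0)]
            exact hmono ⟨hxpos j hjpos, hmemj.2⟩ hrIoc (le_of_lt hr.1)
        have hh3 : |h r| ≤ 3 := by
          simp only [hh_def]
          have h1 : |1 - Real.cos (r * ω)| ≤ 2 := by
            rw [abs_le]
            constructor <;> nlinarith [Real.cos_le_one (r * ω), Real.neg_one_le_cos (r * ω)]
          have h2 : |ind r| ≤ 1 := by
            rw [hind_def]
            by_cases hm : r ∈ Set.Ioc (0:ℝ) c <;>
              simp [Set.indicator_of_mem, Set.indicator_of_notMem, hm]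
          calc |(1 - Real.cos (r * ω)) - ind r|
              ≤ |1 - Real.cos (r * ω)| + |ind r| := abs_sub _ _
            _ ≤ 3 := by linarith
        rw [Real.norm_eq_abs, abs_mul]
        have habs2 : |g r - g (x (j + 1))| ≤ g (x (j + 1)) - φ j := by
          rw [abs_le]; constructor <;> linarith
        calc |g r - g (x (j + 1))| * |h r|
            ≤ (g (x (j + 1)) - φ j) * 3 :=
              mul_le_mul habs2 hh3 (abs_nonneg _) (by linarith)
          _ = 3 * (g (x (j + 1)) - φ j) * 1 := by ring
          _ ≤ 3 * (g (x (j + 1)) - φ j) := by nlinarith [habs2, abs_nonneg (g r - g (x (j+1)))]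
      rw [decomp, hHd, hK]
      rw [hxstep j, abs_of_pos hΔ] at hbound
      have hlb := (abs_le.1 (by rwa [Real.norm_eq_abs] at hbound)).1
      linarith
    have hints : ∀ j : ℕ, j < n → IntervalIntegrable (fun r => g r * h r) volume (x j) (x (j + 1)) :=
      fun j hj => hghsub (x j) (x (j + 1)) (hxmem j (by omega)) (hxmem (j + 1) (by omega))
    have hsum := intervalIntegral.sum_integral_adjacent_intervals (μ := volume)
      (f := fun r => g r * h r) (a := x) (n := n) hints
    rw [hx0, hxn] at hsum
    have hsum_le : ∑ j ∈ Finset.range n,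
        (φ (j + 1) * (H (x j) - H (x (j + 1))) - 3 * Δ * (φ (j + 1) - φ j))
          ≤ ∑ j ∈ Finset.range n, ∫ r in x j..x (j + 1), g r * h r :=
      Finset.sum_le_sum (fun j hj => est j (Finset.mem_range.1 hj))
    rw [hsum] at hsum_le
    have habel : -(φ n * H (x n)) ≤ ∑ j ∈ Finset.range n, φ (j + 1) * (H (x j) - H (x (j + 1))) :=
      abel_nonneg φ (fun j => H (x j)) n (by simp [hφ_def]) hφmono
        (fun m hm => hH0 (x m) (hxmem m hm))
    have hHxn : H (x n) = 0 := by
      rw [hxn]; simp only [hH_def]; exact intervalIntegral.integral_same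
    have htel : ∑ j ∈ Finset.range n, (φ (j + 1) - φ j) = φ n - φ 0 := Finset.sum_range_sub φ n
    have hφn : φ n = g L := by
      simp only [hφ_def, if_neg (by omega : n ≠ 0)]; rw [hxn]
    have hφ0 : φ 0 = 0 := by simp [hφ_def]
    rw [Finset.sum_sub_distrib, ← Finset.mul_sum, htel, hφn, hφ0] at hsum_le
    rw [hHxn] at habel
    have : -(3 * Δ * (g L - 0)) ≤ ∫ r in (0:ℝ)..L, g r * h r := by linarith
    rw [hΔ_def] at this
    linarith
  have hgh0 : 0 ≤ ∫ r in (0:ℝ)..L, g r * h r := by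
    by_contra hneg
    push_neg at hneg
    have hgL : 0 ≤ g L := hg0 L ⟨hL, le_refl L⟩
    obtain ⟨n, hnn⟩ := exists_nat_gt (3 * L * g L / (-(∫ r in (0:ℝ)..L, g r * h r)))
    have hD : 0 < -(∫ r in (0:ℝ)..L, g r * h r) := by linarith
    have hnpos : 0 < n := by
      rcases Nat.eq_zero_or_pos n with rfl | hp
      · exfalso
        have hge : 0 ≤ 3 * L * g L / (-(∫ r in (0:ℝ)..L, g r * h r)) := by positivity
        simp only [Nat.cast_zero] at hnn
        linarith
      · exact hp
    have hmn := hmain n hnpos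
    have hn' : (0:ℝ) < n := Nat.cast_pos.2 hnpos
    rw [div_lt_iff₀ hD] at hnn
    have he1 : 3 * (L / n) * g L = 3 * L * g L / n := by ring
    rw [he1] at hmn
    have he2 : -(∫ r in (0:ℝ)..L, g r * h r) ≤ 3 * L * g L / n := by linarith
    rw [le_div_iff₀ hn'] at he2
    nlinarith
  have hindint : (∫ r in (0:ℝ)..L, g r * ind r) = ∫ r in (0:ℝ)..c, g r := by
    rw [intervalIntegral.integral_of_le hL.le, intervalIntegral.integral_of_le hc0]
    rw [hgind, MeasureTheory.integral_indicator measurableSet_Ioc,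
      MeasureTheory.Measure.restrict_restrict measurableSet_Ioc,
      Set.inter_eq_left.mpr (Set.Ioc_subset_Ioc_right hcL)]
  have hfinal : (∫ r in (0:ℝ)..L, g r * h r)
      = (∫ r in (0:ℝ)..L, g r * (1 - Real.cos (r * ω))) - ∫ r in (0:ℝ)..c, g r := by
    rw [← hindint,
      ← intervalIntegral.integral_sub ((hgsub 0 L h0L hLL).mul_continuousOn hcont.continuousOn)
        (hgindi 0 L h0L hLL)]
    congr 1; funext r; simp only [hh_def]; ring
  rw [hfinal] at hgh0
  linarith

private lemma cond_aux (s : ℝ) (hs : 3 * Real.sqrt 2 * π / 4 ≤ s) :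
    1 + Real.sin s ≤ 4 / 7 * s := by
  have h2 : (1.4 : ℝ) ≤ Real.sqrt 2 := by
    nlinarith [Real.sq_sqrt (show (0:ℝ) ≤ 2 by norm_num), Real.sqrt_nonneg 2]
  have hπ : π ≤ s := by nlinarith [Real.pi_pos]
  rcases le_or_gt s (7/2) with h | h
  · have hsin : Real.sin s ≤ 0 := by
      have h3 : 0 ≤ Real.sin (s - π) :=
        Real.sin_nonneg_of_nonneg_of_le_pi (by linarith) (by nlinarith [Real.pi_gt_three])
      rw [Real.sin_sub_pi] at h3; linarith
    nlinarith [Real.pi_gt_three]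
  · nlinarith [Real.sin_le_one s]

set_option maxHeartbeats 1000000 in
theorem lambdaDelta2_bound_largerange_monotone (ρ : ℝ → ℝ) (hmeas : Measurable ρ)
    (hnonneg : ∀ r ∈ Set.Ioc (0:ℝ) 1, 0 ≤ ρ r)
    (hint3 : IntervalIntegrable (fun r => r ^ 3 * ρ r) volume 0 1)
    (hint1 : IntervalIntegrable (fun r => r * ρ r) volume 0 1)
    (rs : ℝ) (hrs : rs ∈ Set.Ioc (0:ℝ) 1)
    (hmono : MonotoneOn (fun r => r * ρ r) (Set.Ioc (0:ℝ) rs))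
    (δ : ℝ) (hδ : 0 < δ) (k : ℤ × ℤ) (hk : k ≠ 0)
    (hlarge : π ≤ rs * (δ * knorm2 k)) :
    π * min (∫ r in (rs / Real.sqrt 2)..rs, r * ρ r)
            (∫ r in (0:ℝ)..((3 / 7) * rs), r * ρ r)
      ≤ δ ^ 2 * lambdaDelta2 ρ δ (knorm2 k) := by
  obtain ⟨hrs0, hrs1⟩ := hrs
  set κ := knorm2 k with hκ_def
  set M := δ * κ with hM_def
  have hM0 : 0 < M := by
    by_contra hc; push_neg at hc
    have h1 : rs * M ≤ 0 := mul_nonpos_of_nonneg_of_nonpos hrs0.le hc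
    linarith [Real.pi_pos, hlarge]
  have hsqrt2 : (0:ℝ) < Real.sqrt 2 := Real.sqrt_pos.2 (by norm_num)
  have hsq2 : Real.sqrt 2 * Real.sqrt 2 = 2 := Real.mul_self_sqrt (by norm_num)
  have hsqrt2ge1 : (1:ℝ) ≤ Real.sqrt 2 := by nlinarith
  set I₁ := ∫ r in (rs / Real.sqrt 2)..rs, r * ρ r with hI1_def
  set I₂ := ∫ r in (0:ℝ)..((3 / 7) * rs), r * ρ r with hI2_def
  set m₀ := min I₁ I₂ with hm0_def
  set f : ℝ → ℝ := fun θ =>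
    ∫ r in (0:ℝ)..1, r * ρ r * (1 - Real.cos (r * δ * κ * Real.cos θ)) with hf_def
  have hgsub : ∀ a b : ℝ, a ∈ Set.Icc (0:ℝ) 1 → b ∈ Set.Icc (0:ℝ) 1 →
      IntervalIntegrable (fun r => r * ρ r) volume a b := fun a b ha hb =>
    hint1.mono_set (Set.uIcc_subset_uIcc (by simpa [Set.uIcc_of_le zero_le_one] using ha)
      (by simpa [Set.uIcc_of_le zero_le_one] using hb))
  have hnn : ∀ r ∈ Set.Icc (0:ℝ) 1, 0 ≤ r * ρ r := by
    intro r hr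
    rcases eq_or_lt_of_le hr.1 with h | h
    · simp [← h]
    · exact mul_nonneg (le_of_lt h) (hnonneg r ⟨h, hr.2⟩)
  have hFcont : ∀ r : ℝ, Continuous fun θ : ℝ =>
      r * ρ r * (1 - Real.cos (r * δ * κ * Real.cos θ)) := by
    intro r; fun_prop
  have hFmeas : ∀ θ : ℝ, Measurable fun r : ℝ =>
      r * ρ r * (1 - Real.cos (r * δ * κ * Real.cos θ)) := by
    intro θ
    apply (measurable_id.mul hmeas).mul
    fun_prop
  -- continuity of f
  have hf_cont : Continuous f := by
    have heq : f = fun θ => ∫ r in Set.Ioc (0:ℝ) 1,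
        r * ρ r * (1 - Real.cos (r * δ * κ * Real.cos θ)) := by
      funext θ; simp only [hf_def]; exact intervalIntegral.integral_of_le zero_le_one
    rw [heq]
    apply MeasureTheory.continuous_of_dominated (bound := fun r => |r * ρ r| * 2)
    · exact fun θ => (hFmeas θ).aestronglyMeasurable
    · intro θ
      filter_upwards with r
      rw [Real.norm_eq_abs, abs_mul]
      have h1 : |1 - Real.cos (r * δ * κ * Real.cos θ)| ≤ 2 := by
        rw [abs_le]
        constructor <;> nlinarith [Real.cos_le_one (r * δ * κ * Real.cos θ),
          Real.neg_one_le_cos (r * δ * κ * Real.cos θ)]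
      exact mul_le_mul_of_nonneg_left h1 (abs_nonneg _)
    · exact hint1.1.norm.mul_const 2
    · filter_upwards with r
      exact hFcont r
  have hf_int : ∀ a b : ℝ, IntervalIntegrable f volume a b :=
    fun a b => hf_cont.intervalIntegrable a b
  have hf_nonneg : ∀ θ : ℝ, 0 ≤ f θ := by
    intro θ
    simp only [hf_def]
    apply intervalIntegral.integral_nonneg zero_le_one
    intro r hr
    have h2 : 0 ≤ 1 - Real.cos (r * δ * κ * Real.cos θ) := by
      nlinarith [Real.cos_le_one (r * δ * κ * Real.cos θ)]
    exact mul_nonneg (hnn r hr) h2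
  -- pointwise lower bound on [0, π/4]
  have hpt : ∀ θ ∈ Set.Icc (0:ℝ) (π / 4), m₀ ≤ f θ := by
    intro θ hθ
    have hu1 : Real.cos θ ≤ 1 := Real.cos_le_one θ
    have hu2 : Real.sqrt 2 / 2 ≤ Real.cos θ := by
      rw [← Real.cos_pi_div_four]
      exact Real.cos_le_cos_of_nonneg_of_le_pi hθ.1 (by linarith [Real.pi_pos]) hθ.2
    have hu0 : 0 < Real.cos θ := by nlinarith
    have hω0 : 0 < M * Real.cos θ := mul_pos hM0 hu0
    have hfrw : f θ = ∫ r in (0:ℝ)..1, r * ρ r * (1 - Real.cos (r * (M * Real.cos θ))) := by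
      simp only [hf_def]
      apply intervalIntegral.integral_congr
      intro r _
      have he : r * δ * κ * Real.cos θ = r * (M * Real.cos θ) := by rw [hM_def]; ring
      simp only [he]
    have hcosc : Continuous fun r : ℝ => 1 - Real.cos (r * (M * Real.cos θ)) := by fun_prop
    have hP_int : ∀ a b : ℝ, a ∈ Set.Icc (0:ℝ) 1 → b ∈ Set.Icc (0:ℝ) 1 →
        IntervalIntegrable (fun r => r * ρ r * (1 - Real.cos (r * (M * Real.cos θ)))) volume a b :=
      fun a b ha hb => (hgsub a b ha hb).mul_continuousOn hcosc.continuousOn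
    have hrsI : rs ∈ Set.Icc (0:ℝ) 1 := ⟨hrs0.le, hrs1⟩
    have h0I : (0:ℝ) ∈ Set.Icc (0:ℝ) 1 := ⟨le_refl _, zero_le_one⟩
    have h1I : (1:ℝ) ∈ Set.Icc (0:ℝ) 1 := ⟨zero_le_one, le_refl _⟩
    have hsplit : f θ = (∫ r in (0:ℝ)..rs, r * ρ r * (1 - Real.cos (r * (M * Real.cos θ))))
        + ∫ r in rs..1, r * ρ r * (1 - Real.cos (r * (M * Real.cos θ))) := by
      rw [hfrw, ← intervalIntegral.integral_add_adjacent_intervals (hP_int 0 rs h0I hrsI)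
        (hP_int rs 1 hrsI h1I)]
    have htail : 0 ≤ ∫ r in rs..1, r * ρ r * (1 - Real.cos (r * (M * Real.cos θ))) := by
      apply intervalIntegral.integral_nonneg hrs1
      intro r hr
      have h2 : 0 ≤ 1 - Real.cos (r * (M * Real.cos θ)) := by
        nlinarith [Real.cos_le_one (r * (M * Real.cos θ))]
      exact mul_nonneg (hnn r ⟨le_trans hrs0.le hr.1, hr.2⟩) h2
    rcases le_or_gt (rs * M) (3 * π / 2) with hcase | hcase
    · -- Case 1 : use I₁
      have hdivle : rs / Real.sqrt 2 ≤ rs := by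
        apply div_le_self hrs0.le hsqrt2ge1
      have hdivpos : 0 < rs / Real.sqrt 2 := div_pos hrs0 hsqrt2
      have hdivI : rs / Real.sqrt 2 ∈ Set.Icc (0:ℝ) 1 := ⟨hdivpos.le, le_trans hdivle hrs1⟩
      have hsplit2 : (∫ r in (0:ℝ)..rs, r * ρ r * (1 - Real.cos (r * (M * Real.cos θ))))
          = (∫ r in (0:ℝ)..(rs / Real.sqrt 2), r * ρ r * (1 - Real.cos (r * (M * Real.cos θ))))
          + ∫ r in (rs / Real.sqrt 2)..rs, r * ρ r * (1 - Real.cos (r * (M * Real.cos θ))) := by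
        rw [← intervalIntegral.integral_add_adjacent_intervals (hP_int 0 _ h0I hdivI)
          (hP_int _ rs hdivI hrsI)]
      have hp1 : 0 ≤ ∫ r in (0:ℝ)..(rs / Real.sqrt 2),
          r * ρ r * (1 - Real.cos (r * (M * Real.cos θ))) := by
        apply intervalIntegral.integral_nonneg hdivpos.le
        intro r hr
        have h2 : 0 ≤ 1 - Real.cos (r * (M * Real.cos θ)) := by
          nlinarith [Real.cos_le_one (r * (M * Real.cos θ))]
        exact mul_nonneg (hnn r ⟨hr.1, le_trans hr.2 hdivI.2⟩) h2
      have hp2 : I₁ ≤ ∫ r in (rs / Real.sqrt 2)..rs,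
          r * ρ r * (1 - Real.cos (r * (M * Real.cos θ))) := by
        rw [hI1_def]
        apply intervalIntegral.integral_mono_on hdivle
          (hgsub _ _ hdivI hrsI) (hP_int _ _ hdivI hrsI)
        intro r hr
        have hr0 : 0 < r := lt_of_lt_of_le hdivpos hr.1
        have hcosle : Real.cos (r * (M * Real.cos θ)) ≤ 0 := by
          apply Real.cos_nonpos_of_pi_div_two_le_of_le
          · have e1 : rs / Real.sqrt 2 * (M * (Real.sqrt 2 / 2)) = rs * M / 2 := by
              have h' : rs / Real.sqrt 2 = rs * Real.sqrt 2 / 2 := by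
                rw [div_eq_div_iff (ne_of_gt hsqrt2) (by norm_num : (2:ℝ) ≠ 0)]
                linear_combination (-rs) * hsq2
              rw [h']
              linear_combination rs * M / 4 * hsq2
            have e2 : M * (Real.sqrt 2 / 2) ≤ M * Real.cos θ :=
              mul_le_mul_of_nonneg_left hu2 hM0.le
            have e3 : rs / Real.sqrt 2 * (M * (Real.sqrt 2 / 2)) ≤ r * (M * Real.cos θ) :=
              mul_le_mul hr.1 e2 (mul_nonneg hM0.le (by positivity)) hr0.le
            rw [e1] at e3
            linarith [hlarge]
          · have e4 : r * (M * Real.cos θ) ≤ rs * (M * 1) :=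
              mul_le_mul hr.2 (mul_le_mul_of_nonneg_left hu1 hM0.le) hω0.le hrs0.le
            rw [mul_one] at e4
            linarith
        have h5 : (1:ℝ) ≤ 1 - Real.cos (r * (M * Real.cos θ)) := by linarith
        have h6 : 0 ≤ r * ρ r := hnn r ⟨hr0.le, le_trans hr.2 hrs1⟩
        nlinarith
      have hm1 : m₀ ≤ I₁ := min_le_left _ _
      linarith
    · -- Case 2 : use I₂ via key_mono
      have hs : 3 * Real.sqrt 2 * π / 4 ≤ rs * (M * Real.cos θ) := by
        have h7 : 3 * π / 2 * (Real.sqrt 2 / 2) ≤ rs * M * Real.cos θ := by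
          exact mul_le_mul hcase.le hu2 (by positivity) (mul_nonneg hrs0.le hM0.le)
        calc 3 * Real.sqrt 2 * π / 4 = 3 * π / 2 * (Real.sqrt 2 / 2) := by ring
          _ ≤ rs * M * Real.cos θ := h7
          _ = rs * (M * Real.cos θ) := by ring
      have hcond : 1 + Real.sin (rs * (M * Real.cos θ))
          ≤ (M * Real.cos θ) * (rs - 3 / 7 * rs) := by
        calc 1 + Real.sin (rs * (M * Real.cos θ))
            ≤ 4 / 7 * (rs * (M * Real.cos θ)) := cond_aux _ hs
          _ = (M * Real.cos θ) * (rs - 3 / 7 * rs) := by ring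
      have hkey := key_mono (fun r => r * ρ r) rs (3 / 7 * rs) (M * Real.cos θ)
        hrs0 (by linarith) (by linarith) hω0
        (fun r hr => mul_nonneg hr.1.le (hnonneg r ⟨hr.1, le_trans hr.2 hrs1⟩))
        hmono (hgsub 0 rs h0I hrsI) hcond
      have hm2 : m₀ ≤ I₂ := min_le_right _ _
      rw [hI2_def] at hm2
      have : (3:ℝ) / 7 * rs = (3 / 7) * rs := by norm_num
      linarith [hkey, htail, hsplit.ge, hm2]
  -- assemble
  have hJ1 : (π / 4 - 0) • m₀ ≤ ∫ θ in (0:ℝ)..(π / 4), f θ := by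
    rw [← intervalIntegral.integral_const]
    exact intervalIntegral.integral_mono_on (by positivity) intervalIntegrable_const
      (hf_int _ _) hpt
  have hJ2 : 0 ≤ ∫ θ in (π / 4)..(π / 2), f θ :=
    intervalIntegral.integral_nonneg (by linarith [Real.pi_pos]) (fun θ _ => hf_nonneg θ)
  have hJsplit : (∫ θ in (0:ℝ)..(π / 2), f θ)
      = (∫ θ in (0:ℝ)..(π / 4), f θ) + ∫ θ in (π / 4)..(π / 2), f θ :=
    (intervalIntegral.integral_add_adjacent_intervals (hf_int _ _) (hf_int _ _)).symm
  have hfold : (∫ θ in (0:ℝ)..(π / 2), ∫ r in (0:ℝ)..1,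
      r * ρ r * (1 - Real.cos (r * δ * κ * Real.cos θ))) = ∫ θ in (0:ℝ)..(π / 2), f θ := rfl
  unfold lambdaDelta2
  rw [hfold]
  have hδ0 : δ ^ 2 ≠ 0 := by positivity
  have hfin : δ ^ 2 * (4 / δ ^ 2 * ∫ θ in (0:ℝ)..(π / 2), f θ)
      = 4 * ∫ θ in (0:ℝ)..(π / 2), f θ := by
    field_simp
  rw [hfin]
  rw [smul_eq_mul] at hJ1
  nlinarith [hJ1, hJ2, hJsplit.ge, hJsplit.le]
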